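/- arXiv:1412.4033 — 3 statements merged into one kernel-verified Lean document; each statement's English description precedes it below -/
import Mathlib

section
/- Let G be an abelian Lie group acting smoothly by isometries on a Riemannian manifold P, and let p₀ ∈ P be a point at which the action is locally free (the evaluation map from the Lie algebra of G to T_{p₀}P is injective). If g₀ ∈ G fixes p₀, then g₀ is a locally isolated period at p₀: there exist a G-invariant open neighborhood P' of p₀ and an open neighborhood G' of g₀ in G such that no element of G' other than g₀ has a fixed point in P'. -/
open Manifold

/-- Let the abelian Lie group `G` (here a finite-dimensional real vector
group, with Lie algebra `G` itself) act smoothly by isometries on a Riemannian manifold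
`P` (a smooth manifold equipped with a metric), via `μ`. If the action is locally free
at `p₀` (the evaluation map `ξ ↦ ξ_P(p₀)` on the Lie algebra is injective, i.e. the
derivative at `0` of `g ↦ μ g p₀` has trivial kernel) and `g₀` fixes `p₀`, then `g₀` is
a locally isolated period at `p₀`: there are a `G`-invariant open neighborhood `P'` of
`p₀` and an open neighborhood `G'` of `g₀` such that no `g ∈ G'` other than `g₀` has a
fixed point in `P'`. -/
theorem stmt2 {G : Type*} [NormedAddCommGroup G] [NormedSpace ℝ G] [FiniteDimensional ℝ G]
    {E : Type*} [NormedAddCommGroup E] [NormedSpace ℝ E] [FiniteDimensional ℝ E]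
    {P : Type*} [MetricSpace P] [ChartedSpace E P]
    [IsManifold (modelWithCornersSelf ℝ E) (⊤ : ℕ∞) P]
    (μ : G → P → P)
    (hsmooth : ContMDiff ((modelWithCornersSelf ℝ G).prod (modelWithCornersSelf ℝ E))
      (modelWithCornersSelf ℝ E) (⊤ : ℕ∞) (fun q : G × P => μ q.1 q.2))
    (hzero : ∀ p, μ 0 p = p)
    (hadd : ∀ g h p, μ (g + h) p = μ g (μ h p))
    (hisom : ∀ g, Isometry (μ g))
    (p₀ : P)
    (hfree : ∀ ξ : G, ξ ≠ 0 →
      mfderiv (modelWithCornersSelf ℝ G) (modelWithCornersSelf ℝ E)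
        (fun g => μ g p₀) 0 ξ ≠ 0)
    (g₀ : G) (hfix : μ g₀ p₀ = p₀) :
    ∃ P' : Set P, IsOpen P' ∧ p₀ ∈ P' ∧ (∀ g, μ g '' P' ⊆ P') ∧
      ∃ G' : Set G, IsOpen G' ∧ g₀ ∈ G' ∧
        ∀ g ∈ G', g ≠ g₀ → ∀ p ∈ P', μ g p ≠ p := by
  classical
  have hcont : Continuous fun q : G × P => μ q.1 q.2 := hsmooth.continuous
  have hcont1 : ∀ g : G, Continuous (μ g) := fun g =>
    hcont.comp (continuous_const.prodMk continuous_id)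
  have hinv : ∀ (g : G) (p : P), μ (-g) (μ g p) = p := by
    intro g p; rw [← hadd]; simp [hzero]
  have hinv' : ∀ (g : G) (p : P), μ g (μ (-g) p) = p := by
    intro g p; rw [← hadd]; simp [hzero]
  have hinj : ∀ g : G, Function.Injective (μ g) := fun g => (hisom g).injective
  have hnsmul : ∀ (m : ℕ) (g : G) (p : P), μ g p = p → μ (m • g) p = p := by
    intro m g p hp
    induction m with
    | zero => simpa using hzero p
    | succ k ih => rw [succ_nsmul, hadd, hp, ih]
  have hopen : ∀ g : G, IsOpenMap (μ g) := by
    intro g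
    exact (Homeomorph.mk ⟨μ g, μ (-g), hinv g, hinv' g⟩ (hcont1 g) (hcont1 (-g))).isOpenMap
  by_contra hcontra
  push_neg at hcontra
  -- extract sequences of fixed points
  have key : ∀ n : ℕ, ∃ g : G, ‖g - g₀‖ < 1 / (n + 1) ∧ g ≠ g₀ ∧
      ∃ q : P, dist q p₀ < 1 / (n + 1) ∧ μ g q = q := by
    intro n
    have hpos : (0:ℝ) < 1 / (n + 1) := by positivity
    set Sat : Set P := ⋃ h : G, μ h '' Metric.ball p₀ (1 / (n + 1)) with hSat
    have hSopen : IsOpen Sat := isOpen_iUnion fun h => hopen h _ Metric.isOpen_ball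
    have hSmem : p₀ ∈ Sat := Set.mem_iUnion.2 ⟨0, ⟨p₀, Metric.mem_ball_self hpos, hzero p₀⟩⟩
    have hSinv : ∀ g : G, μ g '' Sat ⊆ Sat := by
      rintro g p ⟨x, hx, rfl⟩
      rcases Set.mem_iUnion.1 hx with ⟨h, q, hq, rfl⟩
      exact Set.mem_iUnion.2 ⟨g + h, q, hq, hadd g h q⟩
    obtain ⟨g, hg1, hg2, p, hp, hfp⟩ := hcontra Sat hSopen hSmem hSinv
      (Metric.ball g₀ (1 / (n + 1))) Metric.isOpen_ball (Metric.mem_ball_self hpos)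
    rcases Set.mem_iUnion.1 hp with ⟨h, q, hq, rfl⟩
    refine ⟨g, ?_, hg2, q, by simpa [Metric.mem_ball] using hq, ?_⟩
    · simpa [Metric.mem_ball, dist_eq_norm] using hg1
    · apply hinj h
      calc μ h (μ g q) = μ (h + g) q := (hadd h g q).symm
        _ = μ (g + h) q := by rw [add_comm]
        _ = μ g (μ h q) := hadd g h q
        _ = μ h q := hfp
  choose gs hgs1 hgs2 qs hqs hper using key
  have hqs0 : Filter.Tendsto qs Filter.atTop (nhds p₀) := by
    apply tendsto_iff_dist_tendsto_zero.2
    apply squeeze_zero (fun n => dist_nonneg) (fun n => (hqs n).le)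
    exact tendsto_one_div_add_atTop_nhds_zero_nat
  -- periods of p₀ of any prescribed small norm
  have periods : ∀ δ : ℝ, 0 < δ → ∃ t : G, ‖t‖ = δ ∧ μ t p₀ = p₀ := by
    intro δ hδ
    set ε : ℕ → G := fun n => gs n - g₀ with hε
    have hεpos : ∀ n, 0 < ‖ε n‖ := by
      intro n
      simpa [hε, norm_pos_iff, sub_eq_zero] using hgs2 n
    have hεlim : Filter.Tendsto (fun n => ‖ε n‖) Filter.atTop (nhds 0) := by
      apply squeeze_zero (fun n => (norm_nonneg _)) (fun n => (hgs1 n).le)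
      exact tendsto_one_div_add_atTop_nhds_zero_nat
    set m : ℕ → ℕ := fun n => ⌊δ / ‖ε n‖⌋₊ with hm
    set t : ℕ → G := fun n => m n • ε n with ht
    have htnorm : ∀ n, ‖t n‖ = (m n : ℝ) * ‖ε n‖ := by
      intro n
      have hcast : t n = ((m n : ℝ)) • ε n := (Nat.cast_smul_eq_nsmul ℝ (m n) (ε n)).symm
      rw [hcast, norm_smul]
      simp
    have ht_le : ∀ n, ‖t n‖ ≤ δ := by
      intro n
      rw [htnorm n]
      have h1 : (m n : ℝ) ≤ δ / ‖ε n‖ := Nat.floor_le (by positivity)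
      calc (m n : ℝ) * ‖ε n‖ ≤ (δ / ‖ε n‖) * ‖ε n‖ :=
            mul_le_mul_of_nonneg_right h1 (norm_nonneg _)
        _ = δ := div_mul_cancel₀ _ (hεpos n).ne'
    have ht_ge : ∀ n, δ - ‖ε n‖ ≤ ‖t n‖ := by
      intro n
      rw [htnorm n]
      have h2 : δ / ‖ε n‖ < (m n : ℝ) + 1 := Nat.lt_floor_add_one _
      have h3 : δ < ((m n : ℝ) + 1) * ‖ε n‖ := (div_lt_iff₀ (hεpos n)).1 h2
      nlinarith [hεpos n]
    have hdist : ∀ n, dist (μ (t n) (qs n)) p₀ = dist (qs n) p₀ := by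
      intro n
      have h1 : μ (m n • gs n) (qs n) = qs n := hnsmul _ _ _ (hper n)
      have h2 : μ (m n • g₀) p₀ = p₀ := hnsmul _ _ _ hfix
      have h3 : μ (m n • g₀) (μ (t n) (qs n)) = qs n := by
        rw [← hadd]
        have he : m n • g₀ + t n = m n • gs n := by
          simp [ht, hε, smul_sub]
        rw [he, h1]
      calc dist (μ (t n) (qs n)) p₀
          = dist (μ (m n • g₀) (μ (t n) (qs n))) (μ (m n • g₀) p₀) :=
            ((hisom (m n • g₀)).dist_eq _ _).symm
        _ = dist (qs n) p₀ := by rw [h3, h2]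
    have hmem : ∀ n, t n ∈ Metric.closedBall (0:G) δ := by
      intro n
      simpa [Metric.mem_closedBall, dist_zero_right] using ht_le n
    obtain ⟨t₀, ht₀mem, φ, hφ, hφt⟩ :=
      (isCompact_closedBall (0:G) δ).tendsto_subseq hmem
    have hφtop : Filter.Tendsto φ Filter.atTop Filter.atTop := hφ.tendsto_atTop
    have hqφ : Filter.Tendsto (fun n => qs (φ n)) Filter.atTop (nhds p₀) :=
      hqs0.comp hφtop
    -- the two limits of μ (t (φ n)) (qs (φ n))
    have hlim1 : Filter.Tendsto (fun n => μ (t (φ n)) (qs (φ n))) Filter.atTop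
        (nhds (μ t₀ p₀)) := by
      have : Filter.Tendsto (fun n => (t (φ n), qs (φ n))) Filter.atTop
          (nhds (t₀, p₀)) := hφt.prodMk_nhds hqφ
      exact (hcont.tendsto (t₀, p₀)).comp this
    have hlim2 : Filter.Tendsto (fun n => μ (t (φ n)) (qs (φ n))) Filter.atTop
        (nhds p₀) := by
      apply tendsto_iff_dist_tendsto_zero.2
      have : ∀ n, dist (μ (t (φ n)) (qs (φ n))) p₀ = dist (qs (φ n)) p₀ :=
        fun n => hdist (φ n)
      simp only [this]
      exact (tendsto_iff_dist_tendsto_zero.1 hqφ)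
    have heq : μ t₀ p₀ = p₀ := tendsto_nhds_unique hlim1 hlim2
    have hnorm1 : ‖t₀‖ ≤ δ := by
      simpa [Metric.mem_closedBall, dist_zero_right] using ht₀mem
    have hnormlim : Filter.Tendsto (fun n => ‖t (φ n)‖) Filter.atTop (nhds ‖t₀‖) :=
      (continuous_norm.tendsto t₀).comp hφt
    have hlow : Filter.Tendsto (fun n => δ - ‖ε (φ n)‖) Filter.atTop (nhds δ) := by
      have := (tendsto_const_nhds (x := δ) (f := Filter.atTop)).sub (hεlim.comp hφtop)
      simpa using this
    have hnorm2 : δ ≤ ‖t₀‖ :=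
      le_of_tendsto_of_tendsto' hlow hnormlim (fun n => ht_ge (φ n))
    exact ⟨t₀, le_antisymm hnorm1 hnorm2, heq⟩
  -- sequence of arbitrarily small nonzero periods
  have small : ∀ k : ℕ, ∃ t : G, ‖t‖ = 1 / (k + 1) ∧ μ t p₀ = p₀ := fun k =>
    periods _ (by positivity)
  choose s hs1 hs2 using small
  have hsnorm : ∀ k : ℕ, (0:ℝ) < ‖s k‖ := by
    intro k; rw [hs1 k]; positivity
  have hs0 : Filter.Tendsto s Filter.atTop (nhds 0) := by
    rw [tendsto_zero_iff_norm_tendsto_zero]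
    simp only [hs1]
    exact tendsto_one_div_add_atTop_nhds_zero_nat
  -- differential of the orbit map at 0
  have hfsm : ContMDiff (modelWithCornersSelf ℝ G) (modelWithCornersSelf ℝ E) (⊤ : ℕ∞)
      (fun g : G => μ g p₀) :=
    hsmooth.comp (contMDiff_id.prodMk contMDiff_const)
  have hmd : MDifferentiableAt (modelWithCornersSelf ℝ G) (modelWithCornersSelf ℝ E)
      (fun g : G => μ g p₀) 0 := hfsm.mdifferentiableAt (by simp)
  have hw : writtenInExtChartAt (modelWithCornersSelf ℝ G) (modelWithCornersSelf ℝ E)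
      (0 : G) (fun g : G => μ g p₀) =
      fun g : G => (extChartAt (modelWithCornersSelf ℝ E) p₀) (μ g p₀) := by
    ext g
    simp [writtenInExtChartAt, extChartAt_model_space_eq_id, hzero p₀, chartAt_self_eq]
  have h2 := hmd.hasMFDerivAt.2
  rw [hw] at h2
  have hr : Set.range (modelWithCornersSelf ℝ G) = Set.univ := by simp
  rw [hr] at h2
  let M : G →L[ℝ] E := mfderiv (modelWithCornersSelf ℝ G) (modelWithCornersSelf ℝ E) (fun g => μ g p₀) 0
  have h2' : HasFDerivWithinAt
      (fun g : G => (extChartAt (modelWithCornersSelf ℝ E) p₀) (μ g p₀))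
      M
      Set.univ (0 : G) := h2
  replace h2' := hasFDerivWithinAt_univ.mp h2'
  have hdiff : DifferentiableAt ℝ
      (fun g : G => (extChartAt (modelWithCornersSelf ℝ E) p₀) (μ g p₀)) 0 :=
    h2'.differentiableAt
  set D' : G →L[ℝ] E :=
    fderiv ℝ (fun g : G => (extChartAt (modelWithCornersSelf ℝ E) p₀) (μ g p₀)) 0 with hD'
  have hfd : HasFDerivAt
      (fun g : G => (extChartAt (modelWithCornersSelf ℝ E) p₀) (μ g p₀)) D' 0 :=
    hdiff.hasFDerivAt
  have hEq := h2'.unique hfd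
  have happ : ∀ ξ : G, ξ ≠ 0 → D' ξ ≠ 0 := by
    intro ξ hne h0
    apply hfree ξ hne
    change M ξ = 0
    rw [hEq]
    exact h0
  have hDinj : LinearMap.ker (D' : G →ₗ[ℝ] E) = ⊥ := by
    rw [LinearMap.ker_eq_bot']
    intro ξ hξ
    by_contra hne
    exact happ ξ hne hξ
  obtain ⟨K, hK, hant⟩ := LinearMap.exists_antilipschitzWith _ hDinj
  -- contradiction
  have hcK : (0:ℝ) < 1 / (2 * (K:ℝ)) := by
    have : (0:ℝ) < (K:ℝ) := hK
    positivity
  have hb := hfd.isLittleO.def hcK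
  have hev : ∀ᶠ k in Filter.atTop,
      ‖(extChartAt (modelWithCornersSelf ℝ E) p₀) (μ (s k) p₀) - (extChartAt (modelWithCornersSelf ℝ E) p₀) (μ (0:G) p₀) - D' (s k - 0)‖ ≤ 1 / (2 * (K:ℝ)) * ‖s k - 0‖ := by
    have := hs0.eventually hb
    simpa using this
  rcases hev.exists with ⟨k, hk⟩
  have hzero' : μ (s k) p₀ = μ (0:G) p₀ := by rw [hs2 k, hzero]
  have hDk : ‖D' (s k)‖ ≤ 1 / (2 * (K:ℝ)) * ‖s k‖ := by
    have : ‖(extChartAt (modelWithCornersSelf ℝ E) p₀) (μ (s k) p₀) - (extChartAt (modelWithCornersSelf ℝ E) p₀) (μ (0:G) p₀) - D' (s k - 0)‖ = ‖D' (s k)‖ := by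
      rw [hzero']
      simp
    rw [this] at hk
    simpa using hk
  have hlower : ‖s k‖ ≤ (K:ℝ) * ‖D' (s k)‖ := by
    have := hant.le_mul_dist (s k) 0
    simpa [dist_zero_right, dist_eq_norm, map_zero] using this
  have hKpos : (0:ℝ) < (K:ℝ) := hK
  have : ‖s k‖ ≤ (1/2 : ℝ) * ‖s k‖ := by
    calc ‖s k‖ ≤ (K:ℝ) * ‖D' (s k)‖ := hlower
      _ ≤ (K:ℝ) * (1 / (2 * (K:ℝ)) * ‖s k‖) := by
          apply mul_le_mul_of_nonneg_left hDk hKpos.le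
      _ = (1/2 : ℝ) * ‖s k‖ := by field_simp
  nlinarith [hsnorm k]
end

section
/- For an r×1 unit vector β = Φ(m)/‖Φ(m)‖ ∈ ℝ^r with Φ(m) ≠ 0, suppose L : ℝ^r → ℝ^r ⊗ ℂ is a linear map of the form L(ξ)(τ) = ⟨Tτ, Tξ⟩ for an injective linear map T defined on ker Φ(m), and suppose the complex span of Φ(m) intersects the complexification of the space {L(ξ) : ξ ∈ ker Φ(m)} only in 0. Then there exists a constant a > 0 such that for all ξ ∈ ker Φ(m), all t ∈ ℝ and all ϑ ∈ ℝ: ‖e^{iϑ}·t·Φ(m) - β + e^{iϑ}L(ξ)‖ ≥ a‖ξ‖. -/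
open scoped RealInnerProductSpace

/-- Let `Φm ∈ ℝ^r` be nonzero, `β = Φm/‖Φm‖`, and let
`c : ℝ^r → ℂ^r` be the coordinatewise complexification.  Let `L` be a linear map on
`ker Φm = (span{Φm})ᗮ` with values in `(ℝ^r)^∨ ≅ ℝ^r` of the form
`⟨L ξ, τ⟩ = ⟨T τ, T ξ⟩` for an injective linear `T`, and suppose the complex span of
`Φm` meets the complexification of `{L ξ}` only in `0`.  Then there is `a > 0` such
that for all `ξ ∈ ker Φm`, `t ∈ ℝ`, `ϑ ∈ ℝ`:
`‖e^{iϑ} t Φm - β + e^{iϑ} L ξ‖ ≥ a ‖ξ‖`. -/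
theorem stmt9 {r : ℕ} (Φm : EuclideanSpace ℝ (Fin r)) (hΦm : Φm ≠ 0)
    (c : EuclideanSpace ℝ (Fin r) →ₗ[ℝ] EuclideanSpace ℂ (Fin r))
    (hc : ∀ (v : EuclideanSpace ℝ (Fin r)) (i : Fin r), c v i = (v i : ℂ))
    {F : Type*} [NormedAddCommGroup F] [InnerProductSpace ℝ F]
    (T : ((Submodule.span ℝ {Φm})ᗮ : Submodule ℝ (EuclideanSpace ℝ (Fin r))) →ₗ[ℝ] F)
    (hT : Function.Injective T)
    (L : ((Submodule.span ℝ {Φm})ᗮ : Submodule ℝ (EuclideanSpace ℝ (Fin r))) →ₗ[ℝ]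
      EuclideanSpace ℝ (Fin r))
    (hL : ∀ ξ τ : ((Submodule.span ℝ {Φm})ᗮ : Submodule ℝ (EuclideanSpace ℝ (Fin r))),
      ⟪L ξ, (τ : EuclideanSpace ℝ (Fin r))⟫ = ⟪T τ, T ξ⟫)
    (hspan : Submodule.span ℂ {c Φm} ⊓
      Submodule.span ℂ (c '' Set.range (fun ξ => L ξ)) = ⊥) :
    ∃ a > 0, ∀ ξ : ((Submodule.span ℝ {Φm})ᗮ : Submodule ℝ (EuclideanSpace ℝ (Fin r))),
      ∀ t ϑ : ℝ,
        a * ‖ξ‖ ≤ ‖(Complex.exp (ϑ * Complex.I) * t) • c Φm - c (‖Φm‖⁻¹ • Φm)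
          + Complex.exp (ϑ * Complex.I) • c (L ξ)‖ := by
  have hinner : ∀ x y : EuclideanSpace ℝ (Fin r),
      (inner ℂ (c x) (c y) : ℂ) = ((inner ℝ x y : ℝ) : ℂ) := by
    intro x y
    simp [PiLp.inner_apply, hc, RCLike.inner_apply, Complex.ofReal_sum]
  have hnorm : ∀ x : EuclideanSpace ℝ (Fin r), ‖c x‖ = ‖x‖ := by
    intro x; simp [EuclideanSpace.norm_eq, hc]
  obtain ⟨k, hk0, hk⟩ := T.exists_antilipschitzWith (LinearMap.ker_eq_bot.2 hT)
  refine ⟨((k : ℝ)⁻¹) ^ 2, by positivity, ?_⟩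
  intro ξ t ϑ
  rcases eq_or_ne ξ 0 with h0 | h0
  · simp [h0]
  have hξΦ : ⟪(ξ : EuclideanSpace ℝ (Fin r)), Φm⟫ = 0 := by
    have := ξ.2
    rw [Submodule.mem_orthogonal] at this
    have := this Φm (Submodule.mem_span_singleton_self _)
    rwa [real_inner_comm] at this
  set e : ℂ := Complex.exp (ϑ * Complex.I) with he
  set v : EuclideanSpace ℂ (Fin r) :=
    (e * t) • c Φm - c (‖Φm‖⁻¹ • Φm) + e • c (L ξ) with hv
  have hpair : (inner ℂ (c (ξ : EuclideanSpace ℝ (Fin r))) v : ℂ) = e * (‖T ξ‖ ^ 2 : ℝ) := by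
    rw [hv]
    rw [inner_add_right, inner_sub_right, inner_smul_right, inner_smul_right]
    rw [hinner, hinner, hinner]
    have h1 : ⟪(ξ : EuclideanSpace ℝ (Fin r)), ‖Φm‖⁻¹ • Φm⟫ = 0 := by
      rw [real_inner_smul_right, hξΦ, mul_zero]
    have h2 : ⟪(ξ : EuclideanSpace ℝ (Fin r)), L ξ⟫ = ‖T ξ‖ ^ 2 := by
      rw [real_inner_comm, hL ξ ξ, real_inner_self_eq_norm_sq]
    rw [hξΦ, h1, h2]
    push_cast
    ring
  have hCS := norm_inner_le_norm (𝕜 := ℂ) (c (ξ : EuclideanSpace ℝ (Fin r))) v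
  rw [hpair, hnorm] at hCS
  have hek : ‖e‖ = 1 := by
    rw [he]
    simpa using Complex.abs_exp_ofReal_mul_I ϑ
  rw [norm_mul, hek, one_mul, Complex.norm_real, Real.norm_of_nonneg (by positivity)] at hCS
  -- ‖T ξ‖ ≥ k⁻¹ ‖ξ‖
  have hTk : (k : ℝ)⁻¹ * ‖ξ‖ ≤ ‖T ξ‖ := by
    have := hk.le_mul_dist ξ 0
    simp only [map_zero, dist_zero_right] at this
    rw [inv_mul_le_iff₀ (by positivity)] at *
    · linarith [this]
  have hξpos : (0 : ℝ) < ‖ξ‖ := by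
    simpa [norm_pos_iff] using h0
  have key : ‖T ξ‖ ^ 2 ≤ ‖ξ‖ * ‖v‖ := hCS
  have h3 : ((k : ℝ)⁻¹ * ‖ξ‖) ^ 2 ≤ ‖T ξ‖ ^ 2 :=
    pow_le_pow_left₀ (by positivity) hTk 2
  nlinarith [key, h3, hξpos, sq_nonneg (‖ξ‖)]
end

section
/- Let A' be a c×c unitary complex matrix with no eigenvalue equal to 1, and define ψ₂(v,w) = -i·Im⟨v,w⟩ - ½‖v-w‖² on ℂ^c (with the standard Hermitian inner product, ω₀(v,w)=Im⟨v,w⟩). Then the Gaussian integral ∫_{ℂ^c} exp(ψ₂(A'u, u)) du (with respect to Lebesgue measure on ℂ^c ≅ ℝ^{2c}) converges and equals π^c / det(I_c - A'). -/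
open scoped Real


open Matrix Complex

noncomputable section

namespace Stmt14Aux

variable {c : ℕ}

lemma exists_unitary_diag (A' : Matrix (Fin c) (Fin c) ℂ)
    (hA' : A' ∈ Matrix.unitaryGroup (Fin c) ℂ)
    (hdet : (1 - A').det ≠ 0) :
    ∃ (V : Matrix (Fin c) (Fin c) ℂ) (lam : Fin c → ℂ),
      V ∈ Matrix.unitaryGroup (Fin c) ℂ ∧ (∀ j, 0 < (lam j).re) ∧
      1 - A' = V * Matrix.diagonal lam * Vᴴ := by
  classical
  set M : Matrix (Fin c) (Fin c) ℂ := 1 - A' with hMdef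
  have hMdet : IsUnit M.det := hdet.isUnit
  have hA₂ : A'ᴴ * A' = 1 := by
    have := (Matrix.mem_unitaryGroup_iff').mp hA'
    simpa [Matrix.star_eq_conjTranspose] using this
  have hcomm : M * (1 + A') = (1 + A') * M := by
    simp only [hMdef]; noncomm_ring
  set H : Matrix (Fin c) (Fin c) ℂ := Complex.I • ((1 + A') * M⁻¹) with hHdef
  have hMM : M * M⁻¹ = 1 := Matrix.mul_nonsing_inv _ hMdet
  have hMM' : M⁻¹ * M = 1 := Matrix.nonsing_inv_mul _ hMdet
  have key : M * (H + Complex.I • 1) = (2 * Complex.I) • 1 := by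
    have h1 : M * ((1 + A') * M⁻¹) = (1 + A') := by
      rw [← mul_assoc, hcomm, mul_assoc, hMM, mul_one]
    rw [hHdef, mul_add, Matrix.mul_smul, h1, Matrix.mul_smul, mul_one, ← smul_add]
    have h2 : (1 + A') + M = (2:ℂ) • 1 := by
      rw [hMdef, two_smul]; abel
    rw [h2, smul_smul, mul_comm]
  -- H is Hermitian
  have hMHdet : IsUnit Mᴴ.det := by
    rw [Matrix.det_conjTranspose]
    exact hMdet.star
  have hMHM : Mᴴ * (Mᴴ)⁻¹ = 1 := Matrix.mul_nonsing_inv _ hMHdet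
  have hH : H.IsHermitian := by
    have hHconj : Hᴴ = (-Complex.I) • ((Mᴴ)⁻¹ * (1 + A'ᴴ)) := by
      rw [hHdef, Matrix.conjTranspose_smul, Matrix.conjTranspose_mul,
        Matrix.conjTranspose_nonsing_inv]
      simp [Matrix.conjTranspose_add]
    have hcalc : Mᴴ * Hᴴ * M = Mᴴ * H * M := by
      have lhs : Mᴴ * Hᴴ * M = (-Complex.I) • ((1 + A'ᴴ) * M) := by
        rw [hHconj, Matrix.mul_smul, Matrix.smul_mul, ← mul_assoc, hMHM, one_mul]
      have rhs : Mᴴ * H * M = Complex.I • (Mᴴ * (1 + A')) := by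
        rw [hHdef, Matrix.mul_smul, Matrix.smul_mul, mul_assoc, mul_assoc, hMM', mul_one]
      rw [lhs, rhs]
      have e1 : (1 + A'ᴴ) * M = A'ᴴ - A' := by
        rw [hMdef, mul_sub, add_mul, add_mul, mul_one, one_mul, mul_one, hA₂]
        abel
      have e2 : Mᴴ * (1 + A') = A' - A'ᴴ := by
        have : Mᴴ = 1 - A'ᴴ := by rw [hMdef]; simp [Matrix.conjTranspose_sub]
        rw [this, sub_mul, mul_add, mul_add, mul_one, one_mul, mul_one, hA₂]
        abel
      rw [e1, e2, neg_smul, ← smul_neg, neg_sub]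
    have h3 : ∀ X : Matrix (Fin c) (Fin c) ℂ, (Mᴴ)⁻¹ * (Mᴴ * X * M) * M⁻¹ = X := by
      intro X
      simp only [← Matrix.mul_assoc]
      rw [Matrix.nonsing_inv_mul _ hMHdet, one_mul, Matrix.mul_assoc, hMM, mul_one]
    have := congrArg (fun X => (Mᴴ)⁻¹ * X * M⁻¹) hcalc
    simp only [h3] at this
    exact this
  -- spectral theorem for H
  set V : Matrix (Fin c) (Fin c) ℂ := (hH.eigenvectorUnitary : Matrix (Fin c) (Fin c) ℂ) with hVdef
  have hVmem : V ∈ Matrix.unitaryGroup (Fin c) ℂ := hH.eigenvectorUnitary.2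
  have hVV : V * Vᴴ = 1 := by
    have := (Matrix.mem_unitaryGroup_iff).mp hVmem
    simpa [Matrix.star_eq_conjTranspose] using this
  have hVV' : Vᴴ * V = 1 := by
    have := (Matrix.mem_unitaryGroup_iff').mp hVmem
    simpa [Matrix.star_eq_conjTranspose] using this
  set d : Fin c → ℝ := hH.eigenvalues with hddef
  have hdj : ∀ j, ((d j : ℂ) + Complex.I) ≠ 0 := by
    intro j h
    have := congrArg Complex.im h
    simp at this
  set lam : Fin c → ℂ := fun j => 2 * Complex.I / ((d j : ℂ) + Complex.I) with hlamdef
  have hlam_re : ∀ j, 0 < (lam j).re := by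
    intro j
    rw [hlamdef]
    simp only [Complex.div_re]
    have h1 : (2 * Complex.I).re = 0 := by simp
    have h2 : (2 * Complex.I).im = 2 := by simp
    have h3 : ((d j : ℂ) + Complex.I).re = d j := by simp
    have h4 : ((d j : ℂ) + Complex.I).im = 1 := by simp
    rw [h1, h2, h3, h4]
    have h5 : 0 < Complex.normSq ((d j : ℂ) + Complex.I) := Complex.normSq_pos.mpr (hdj j)
    rw [zero_mul, zero_div, zero_add, mul_one]
    exact div_pos two_pos h5
  have hHi : H + Complex.I • 1 = V * Matrix.diagonal (fun j => (d j : ℂ) + Complex.I) * Vᴴ := by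
    have hsp := hH.spectral_theorem
    rw [Unitary.conjStarAlgAut_apply, Matrix.star_eq_conjTranspose, ← hVdef] at hsp
    calc H + Complex.I • 1
        = V * Matrix.diagonal (RCLike.ofReal ∘ d) * Vᴴ + Complex.I • (V * Vᴴ) := by
          rw [← hsp, hVV]
      _ = V * (Matrix.diagonal (RCLike.ofReal ∘ d) + Complex.I • 1) * Vᴴ := by
          simp only [Matrix.mul_add, Matrix.add_mul, Matrix.mul_smul, Matrix.smul_mul, mul_one]
      _ = V * Matrix.diagonal (fun j => (d j : ℂ) + Complex.I) * Vᴴ := by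
          congr 2
          rw [Matrix.smul_one_eq_diagonal, Matrix.diagonal_add]
          exact congrArg _ (funext fun j => by simp)
  have hNi : (V * Matrix.diagonal lam * Vᴴ) * (H + Complex.I • 1) = (2 * Complex.I) • 1 := by
    rw [hHi]
    calc (V * Matrix.diagonal lam * Vᴴ) * (V * Matrix.diagonal (fun j => (d j : ℂ) + Complex.I) * Vᴴ)
        = V * (Matrix.diagonal lam * (Vᴴ * V) * Matrix.diagonal (fun j => (d j : ℂ) + Complex.I)) * Vᴴ := by
          simp only [Matrix.mul_assoc]
      _ = V * Matrix.diagonal (fun j => lam j * ((d j : ℂ) + Complex.I)) * Vᴴ := by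
          rw [hVV', mul_one, Matrix.diagonal_mul_diagonal]
      _ = V * ((2 * Complex.I) • 1) * Vᴴ := by
          congr 2
          rw [Matrix.smul_one_eq_diagonal]
          exact congrArg _ (funext fun j => div_mul_cancel₀ _ (hdj j))
      _ = (2 * Complex.I) • 1 := by
          rw [Matrix.mul_smul, Matrix.smul_mul, mul_one, hVV]
  -- invertibility of H + I • 1 and conclusion
  have hdetHi : IsUnit (H + Complex.I • 1).det := by
    have := congrArg Matrix.det key
    rw [Matrix.det_mul, Matrix.det_smul, Matrix.det_one, mul_one] at this
    have h2I : (2 * Complex.I) ^ (Fintype.card (Fin c)) ≠ 0 := by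
      apply pow_ne_zero
      simp [Complex.I_ne_zero]
    have : M.det * (H + Complex.I • 1).det ≠ 0 := this ▸ h2I
    exact (Ne.isUnit (right_ne_zero_of_mul this))
  have hMN : M = V * Matrix.diagonal lam * Vᴴ := by
    have h := key.trans hNi.symm
    have := congrArg (fun X => X * (H + Complex.I • 1)⁻¹) h
    simpa only [Matrix.mul_assoc, Matrix.mul_nonsing_inv _ hdetHi, mul_one] using this
  exact ⟨V, lam, hVmem, hlam_re, hMN⟩


lemma mulVec_VhV {V : Matrix (Fin c) (Fin c) ℂ} (hV : V ∈ Matrix.unitaryGroup (Fin c) ℂ) :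
    V * Vᴴ = 1 := by
  simpa [Matrix.star_eq_conjTranspose] using (Matrix.mem_unitaryGroup_iff).mp hV

lemma mulVec_VVh {V : Matrix (Fin c) (Fin c) ℂ} (hV : V ∈ Matrix.unitaryGroup (Fin c) ℂ) :
    Vᴴ * V = 1 := by
  simpa [Matrix.star_eq_conjTranspose] using (Matrix.mem_unitaryGroup_iff').mp hV

/-- `toEuclideanLin` of a unitary matrix, as a `ℂ`-linear isometry equivalence. -/
def unitaryIso (V : Matrix (Fin c) (Fin c) ℂ) (hV : V ∈ Matrix.unitaryGroup (Fin c) ℂ) :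
    EuclideanSpace ℂ (Fin c) ≃ₗᵢ[ℂ] EuclideanSpace ℂ (Fin c) :=
  LinearEquiv.isometryOfInner
    (LinearEquiv.ofLinear (Matrix.toEuclideanLin V) (Matrix.toEuclideanLin Vᴴ)
      (by
        apply LinearMap.ext
        intro x
        apply (WithLp.equiv 2 (Fin c → ℂ)).injective
        simp only [LinearMap.coe_comp, Function.comp_apply, LinearMap.id_coe, id_eq,
          WithLp.equiv_apply, Matrix.ofLp_toEuclideanLin_apply, Matrix.mulVec_mulVec, mulVec_VhV hV,
          Matrix.one_mulVec])
      (by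
        apply LinearMap.ext
        intro x
        apply (WithLp.equiv 2 (Fin c → ℂ)).injective
        simp only [LinearMap.coe_comp, Function.comp_apply, LinearMap.id_coe, id_eq,
          WithLp.equiv_apply, Matrix.ofLp_toEuclideanLin_apply, Matrix.mulVec_mulVec, mulVec_VVh hV,
          Matrix.one_mulVec]))
    (by
      intro x y
      rw [EuclideanSpace.inner_eq_star_dotProduct, EuclideanSpace.inner_eq_star_dotProduct]
      simp only [LinearEquiv.ofLinear_apply, Matrix.ofLp_toEuclideanLin_apply]
      rw [Matrix.star_mulVec, dotProduct_comm, Matrix.dotProduct_mulVec, Matrix.vecMul_vecMul,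
        mulVec_VVh hV, Matrix.vecMul_one, dotProduct_comm])

@[simp] lemma unitaryIso_apply (V : Matrix (Fin c) (Fin c) ℂ)
    (hV : V ∈ Matrix.unitaryGroup (Fin c) ℂ) (x : EuclideanSpace ℂ (Fin c)) :
    unitaryIso V hV x = Matrix.toEuclideanLin V x := rfl

/-- Restrict scalars of a complex linear isometry equivalence to the reals. -/
def realIso {E F : Type*} [NormedAddCommGroup E] [NormedAddCommGroup F]
    [NormedSpace ℂ E] [NormedSpace ℂ F] (f : E ≃ₗᵢ[ℂ] F) : E ≃ₗᵢ[ℝ] F :=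
  ⟨f.toLinearEquiv.restrictScalars ℝ, f.norm_map⟩

@[simp] lemma realIso_apply {E F : Type*} [NormedAddCommGroup E] [NormedAddCommGroup F]
    [NormedSpace ℂ E] [NormedSpace ℂ F] (f : E ≃ₗᵢ[ℂ] F) (x : E) : realIso f x = f x := rfl

/-- The standard real isometry between `ℂ^c` and `ℝ^(c×2)`. -/
def Phi (c : ℕ) : EuclideanSpace ℂ (Fin c) ≃ₗᵢ[ℝ] EuclideanSpace ℝ ((_ : Fin c) × Fin 2) :=
  (LinearIsometryEquiv.piLpCongrRight 2
      (fun _ : Fin c => Complex.orthonormalBasisOneI.repr)).trans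
    (LinearIsometryEquiv.piLpCurry ℝ 2 fun (_ : Fin c) (_ : Fin 2) => ℝ).symm

lemma Phi_symm_norm_sq (y : EuclideanSpace ℝ ((_ : Fin c) × Fin 2)) (j : Fin c) :
    ‖((Phi c).symm y) j‖ ^ 2 = ∑ k : Fin 2, (y ⟨j, k⟩) ^ 2 := by
  have h1 : ((Phi c).symm y) j
      = Complex.orthonormalBasisOneI.repr.symm
          ((LinearIsometryEquiv.piLpCurry ℝ 2 (fun (_ : Fin c) (_ : Fin 2) => ℝ) y) j) := by
    simp [Phi, LinearIsometryEquiv.piLpCongrRight_symm,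
      LinearIsometryEquiv.piLpCongrRight_apply]
  rw [h1]
  rw [show ‖Complex.orthonormalBasisOneI.repr.symm
        ((LinearIsometryEquiv.piLpCurry ℝ 2 (fun (_ : Fin c) (_ : Fin 2) => ℝ) y) j)‖
      = ‖(LinearIsometryEquiv.piLpCurry ℝ 2 (fun (_ : Fin c) (_ : Fin 2) => ℝ) y) j‖ from
    LinearIsometryEquiv.norm_map _ _]
  rw [EuclideanSpace.norm_eq, Real.sq_sqrt (by positivity)]
  refine Finset.sum_congr rfl fun k _ => ?_
  simp [LinearIsometryEquiv.piLpCurry_apply, Sigma.curry, Real.norm_eq_abs, sq_abs]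

lemma quad_form {V : Matrix (Fin c) (Fin c) ℂ} (hV : V ∈ Matrix.unitaryGroup (Fin c) ℂ)
    (lam : Fin c → ℂ) (v : EuclideanSpace ℂ (Fin c)) :
    (inner ℂ (unitaryIso V hV v)
        (Matrix.toEuclideanLin (V * Matrix.diagonal lam * Vᴴ) (unitaryIso V hV v)) : ℂ)
      = ∑ j, lam j * (‖v j‖ : ℂ) ^ 2 := by
  rw [unitaryIso_apply, EuclideanSpace.inner_eq_star_dotProduct]
  simp only [Matrix.ofLp_toEuclideanLin_apply]
  set v' : Fin c → ℂ := v.ofLp with hv'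
  rw [Matrix.mulVec_mulVec]
  have h1 : V * Matrix.diagonal lam * Vᴴ * V = V * Matrix.diagonal lam := by
    rw [Matrix.mul_assoc, mulVec_VVh hV, mul_one]
  rw [h1, dotProduct_comm, Matrix.star_mulVec, Matrix.dotProduct_mulVec, Matrix.vecMul_vecMul,
    ← Matrix.mul_assoc, mulVec_VVh hV, one_mul]
  have h2 : ∀ j, (star v' ᵥ* Matrix.diagonal lam) j = star (v' j) * lam j := by
    intro j
    rw [Matrix.vecMul_diagonal]
    rfl
  rw [dotProduct]
  refine Finset.sum_congr rfl fun j _ => ?_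
  rw [h2 j]
  have hvj : v' j = v j := rfl
  have h3 : star (v j) * v j = ((‖v j‖ : ℂ)) ^ 2 := by
    rw [Complex.star_def, mul_comm, Complex.mul_conj, Complex.normSq_eq_norm_sq]
    push_cast
    ring
  rw [hvj, mul_assoc, mul_comm (lam j) (v j), ← mul_assoc, h3]
  ring

lemma psi_val (A' : Matrix (Fin c) (Fin c) ℂ) (hA' : A' ∈ Matrix.unitaryGroup (Fin c) ℂ)
    (u : EuclideanSpace ℂ (Fin c)) :
    -Complex.I * (((inner ℂ (Matrix.toEuclideanLin A' u) u : ℂ).im : ℝ) : ℂ)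
        - ((‖Matrix.toEuclideanLin A' u - u‖ ^ 2 / 2 : ℝ) : ℂ)
      = - (inner ℂ u (Matrix.toEuclideanLin (1 - A') u) : ℂ) := by
  have hnorm : ‖Matrix.toEuclideanLin A' u‖ = ‖u‖ := (unitaryIso A' hA').norm_map u
  set z : ℂ := (inner ℂ (Matrix.toEuclideanLin A' u) u : ℂ) with hz
  have hsub : ‖Matrix.toEuclideanLin A' u - u‖ ^ 2 = 2 * ‖u‖ ^ 2 - 2 * z.re := by
    have h := @norm_sub_sq ℂ _ _ _ _ (Matrix.toEuclideanLin A' u) u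
    rw [hnorm] at h
    rw [h]
    simp only [RCLike.re_to_complex, ← hz]
    ring
  have hlin : Matrix.toEuclideanLin (1 - A') u = u - Matrix.toEuclideanLin A' u := by
    have h1 : Matrix.toEuclideanLin (1 : Matrix (Fin c) (Fin c) ℂ) u = u := by
      apply (WithLp.equiv 2 (Fin c → ℂ)).injective
      rw [WithLp.equiv_apply, WithLp.equiv_apply, Matrix.ofLp_toEuclideanLin_apply, Matrix.one_mulVec]
    rw [map_sub, LinearMap.sub_apply, h1]
  rw [hlin, inner_sub_right, inner_self_eq_norm_sq_to_K, ← inner_conj_symm u, ← hz, hsub]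
  apply Complex.ext <;>
    simp [Complex.add_re, Complex.add_im, Complex.ofReal_re, Complex.ofReal_im,
      Complex.conj_re, Complex.conj_im, Complex.mul_re, Complex.mul_im] <;>
    ring

end Stmt14Aux


open MeasureTheory Matrix

/-- Let `A'` be a `c×c` unitary matrix with no eigenvalue `1`, and let
`ψ₂(v,w) = -i Im⟨v,w⟩ - ½‖v-w‖²` on `ℂ^c`.  Then the Gaussian integral
`∫_{ℂ^c} exp(ψ₂(A'u, u)) du` (Lebesgue measure on `ℂ^c ≅ ℝ^{2c}`, transported by any
real-linear isometry `e`) converges and equals `π^c / det(I - A')`. -/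
theorem stmt14 {c : ℕ} (A' : Matrix (Fin c) (Fin c) ℂ)
    (hA' : A' ∈ Matrix.unitaryGroup (Fin c) ℂ)
    (hdet : (1 - A').det ≠ 0)
    (ψ₂ : EuclideanSpace ℂ (Fin c) → EuclideanSpace ℂ (Fin c) → ℂ)
    (hψ : ∀ v w, ψ₂ v w
      = -Complex.I * (((inner ℂ v w : ℂ).im : ℝ) : ℂ) - ((‖v - w‖ ^ 2 / 2 : ℝ) : ℂ))
    (e : EuclideanSpace ℂ (Fin c) ≃ₗᵢ[ℝ] EuclideanSpace ℝ (Fin (2 * c))) :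
    MeasureTheory.Integrable (fun x : EuclideanSpace ℝ (Fin (2 * c)) =>
      Complex.exp (ψ₂ (Matrix.toEuclideanLin A' (e.symm x)) (e.symm x))) ∧
    ∫ x : EuclideanSpace ℝ (Fin (2 * c)),
        Complex.exp (ψ₂ (Matrix.toEuclideanLin A' (e.symm x)) (e.symm x))
      = ((π : ℂ) ^ c) / (1 - A').det := by
  classical
  obtain ⟨V, lam, hVmem, hlam_re, hMN⟩ := Stmt14Aux.exists_unitary_diag A' hA' hdet
  have hlam_ne : ∀ j, lam j ≠ 0 := fun j h => by simpa [h] using (hlam_re j)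
  -- determinant of 1 - A'
  have hdetM : (1 - A').det = ∏ j, lam j := by
    rw [hMN, Matrix.det_mul, Matrix.det_mul, Matrix.det_diagonal]
    have h1 : V.det * Vᴴ.det = 1 := by
      rw [← Matrix.det_mul, Stmt14Aux.mulVec_VhV hVmem, Matrix.det_one]
    calc V.det * (∏ j, lam j) * Vᴴ.det = (∏ j, lam j) * (V.det * Vᴴ.det) := by ring
      _ = ∏ j, lam j := by rw [h1, mul_one]
  set b : ((_ : Fin c) × Fin 2) → ℂ := fun s => lam s.1 with hbdef
  have hb : ∀ s, 0 < (b s).re := fun s => hlam_re s.1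
  set U : EuclideanSpace ℂ (Fin c) ≃ₗᵢ[ℝ] EuclideanSpace ℂ (Fin c) :=
    Stmt14Aux.realIso (Stmt14Aux.unitaryIso V hVmem) with hUdef
  set T : EuclideanSpace ℝ ((_ : Fin c) × Fin 2) ≃ₗᵢ[ℝ] EuclideanSpace ℝ (Fin (2 * c)) :=
    ((Stmt14Aux.Phi c).symm.trans U).trans e with hTdef
  -- pointwise identity
  have hpt : ∀ y : EuclideanSpace ℝ ((_ : Fin c) × Fin 2),
      Complex.exp (ψ₂ (Matrix.toEuclideanLin A' (e.symm (T y))) (e.symm (T y)))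
        = Complex.exp (-∑ s : ((_ : Fin c) × Fin 2), b s * ((y s : ℝ) : ℂ) ^ 2) := by
    intro y
    have h0 : e.symm (T y)
        = (Stmt14Aux.unitaryIso V hVmem) ((Stmt14Aux.Phi c).symm y) := by
      simp [hTdef, hUdef]
    rw [h0]
    congr 1
    set v : EuclideanSpace ℂ (Fin c) := (Stmt14Aux.Phi c).symm y with hvdef
    rw [hψ, Stmt14Aux.psi_val A' hA', hMN, Stmt14Aux.quad_form hVmem lam v]
    rw [neg_inj, ← Finset.univ_sigma_univ, Finset.sum_sigma]
    refine Finset.sum_congr rfl fun j _ => ?_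
    have hn := Stmt14Aux.Phi_symm_norm_sq (c := c) y j
    have hcast : ((‖v j‖ : ℝ) : ℂ) ^ 2 = ((∑ k : Fin 2, (y ⟨j, k⟩) ^ 2 : ℝ) : ℂ) := by
      rw [← hn]; push_cast; ring
    rw [hcast]
    push_cast
    rw [Finset.mul_sum]
  -- now transfer the integral
  have hT : MeasurePreserving T := T.measurePreserving
  have hTemb : MeasurableEmbedding T := T.toHomeomorph.measurableEmbedding
  have hME := EuclideanSpace.volume_preserving_symm_measurableEquiv_toLp ((_ : Fin c) × Fin 2)
  have hMEemb : MeasurableEmbedding ((MeasurableEquiv.toLp 2 (((_ : Fin c) × Fin 2) → ℝ)).symm) :=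
    (MeasurableEquiv.toLp 2 (((_ : Fin c) × Fin 2) → ℝ)).symm.measurableEmbedding
  have hpi_int : Integrable (fun v : ((_ : Fin c) × Fin 2) → ℝ =>
      Complex.exp (-∑ s : ((_ : Fin c) × Fin 2), b s * ((v s : ℝ) : ℂ) ^ 2)) := by
    have := GaussianFourier.integrable_cexp_neg_sum_mul_add hb (fun _ => 0)
    simpa using this
  have hpi_val : ∫ v : ((_ : Fin c) × Fin 2) → ℝ,
      Complex.exp (-∑ s : ((_ : Fin c) × Fin 2), b s * ((v s : ℝ) : ℂ) ^ 2)
      = ∏ s : ((_ : Fin c) × Fin 2), (↑π / b s) ^ (1 / 2 : ℂ) := by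
    have := GaussianFourier.integral_cexp_neg_sum_mul_add hb (fun _ => 0)
    simpa using this
  -- integrability
  have hInt : MeasureTheory.Integrable (fun x : EuclideanSpace ℝ (Fin (2 * c)) =>
      Complex.exp (ψ₂ (Matrix.toEuclideanLin A' (e.symm x)) (e.symm x))) := by
    rw [← hT.integrable_comp_emb hTemb]
    have hcomp : ((fun x : EuclideanSpace ℝ (Fin (2 * c)) =>
        Complex.exp (ψ₂ (Matrix.toEuclideanLin A' (e.symm x)) (e.symm x))) ∘ T)
        = (fun v : ((_ : Fin c) × Fin 2) → ℝ =>
            Complex.exp (-∑ s : ((_ : Fin c) × Fin 2), b s * ((v s : ℝ) : ℂ) ^ 2))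
          ∘ ((MeasurableEquiv.toLp 2 (((_ : Fin c) × Fin 2) → ℝ)).symm) := by
      funext y
      exact hpt y
    rw [hcomp, hME.integrable_comp_emb hMEemb]
    exact hpi_int
  refine ⟨hInt, ?_⟩
  -- the integral value
  have hval : ∫ x : EuclideanSpace ℝ (Fin (2 * c)),
      Complex.exp (ψ₂ (Matrix.toEuclideanLin A' (e.symm x)) (e.symm x))
      = ∏ s : ((_ : Fin c) × Fin 2), (↑π / b s) ^ (1 / 2 : ℂ) := by
    rw [← hT.integral_comp hTemb]
    rw [show (fun y => Complex.exp (ψ₂ (Matrix.toEuclideanLin A' (e.symm (T y))) (e.symm (T y))))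
        = fun y : EuclideanSpace ℝ ((_ : Fin c) × Fin 2) =>
          Complex.exp (-∑ s : ((_ : Fin c) × Fin 2), b s * ((y s : ℝ) : ℂ) ^ 2)
      from funext hpt]
    have hME' := (EuclideanSpace.volume_preserving_symm_measurableEquiv_toLp ((_ : Fin c) × Fin 2)).symm
    rw [← hME'.integral_comp (MeasurableEquiv.measurableEmbedding _)]
    simp only [MeasurableEquiv.symm_symm, MeasurableEquiv.coe_toLp, PiLp.toLp_apply]
    exact hpi_val
  rw [hval]
  -- compute the product
  have hprod : ∏ s : ((_ : Fin c) × Fin 2), (↑π / b s) ^ (1 / 2 : ℂ)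
      = ∏ j : Fin c, ((π : ℂ) / lam j) := by
    rw [← Finset.univ_sigma_univ, Finset.prod_sigma]
    refine Finset.prod_congr rfl fun j _ => ?_
    have hne : ((π : ℂ) / lam j) ≠ 0 :=
      div_ne_zero (Complex.ofReal_ne_zero.mpr Real.pi_ne_zero) (hlam_ne j)
    simp only [hbdef]
    rw [Finset.prod_const, Finset.card_univ, Fintype.card_fin, pow_two,
      ← Complex.cpow_add _ _ hne]
    norm_num
  rw [hprod, Finset.prod_div_distrib, Finset.prod_const, Finset.card_univ, Fintype.card_fin,
    hdetM]
end
end
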